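/- Let μ ∈ ℝ, σ > 0, and let k be a positive integer. Then ∑_{j=1}^{2k−1} ( 1/j + b_{k,j} · exp( (j² − j)·σ²/2 ) ) ≤ σ²/2 ≤ −∑_{j=1}^{2k−1} ( 1/j + b_{k,j} · exp( (j² + j)·σ²/2 ) ); equivalently, these are lower and upper bounds on the Jensen's gap log(E[X]) − E[log(X)] = σ²/2 of a log-normal random variable X = exp(Y) with Y ~ N(μ, σ²). -/

import Mathlib

open Finset

section JensenGapAux
open MeasureTheory Real Finset

lemma integrable_rexp_quadratic {b : ℝ} (hb : 0 < b) (c : ℝ) :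
    Integrable (fun x : ℝ ↦ rexp (-b * x ^ 2 + c * x)) := by
  have h := (integrable_cexp_quadratic (b := (b : ℂ)) (by simpa using hb) (c : ℂ) 0).norm
  refine h.congr ?_
  filter_upwards with x
  rw [show (-(b:ℂ) * x ^ 2 + (c:ℂ) * x + 0 : ℂ) = ((-b * x ^ 2 + c * x : ℝ) : ℂ) by push_cast; ring,
    ← Complex.ofReal_exp, Complex.norm_real, Real.norm_eq_abs, abs_of_pos (exp_pos _)]

lemma integral_rexp_quadratic {b : ℝ} (hb : 0 < b) (c : ℝ) :
    ∫ x : ℝ, rexp (-b * x ^ 2 + c * x) = Real.sqrt (π / b) * rexp (c ^ 2 / (4 * b)) := by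
  have h := integral_cexp_quadratic (b := -(b : ℂ)) (by simpa using hb) (c : ℂ) 0
  have key : ∫ x : ℝ, ((rexp (-b * x ^ 2 + c * x) : ℝ) : ℂ)
      = ((Real.sqrt (π / b) * rexp (c ^ 2 / (4 * b)) : ℝ) : ℂ) := by
    calc ∫ x : ℝ, ((rexp (-b * x ^ 2 + c * x) : ℝ) : ℂ)
        = ∫ x : ℝ, Complex.exp (-(b:ℂ) * x ^ 2 + (c:ℂ) * x + 0) := by
          congr 1; ext x; rw [Complex.ofReal_exp]; push_cast; ring_nf
      _ = (↑π / - -(b:ℂ)) ^ (1 / 2 : ℂ) * Complex.exp (0 - (c:ℂ) ^ 2 / (4 * -(b:ℂ))) := h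
      _ = ((Real.sqrt (π / b) * rexp (c ^ 2 / (4 * b)) : ℝ) : ℂ) := by
          rw [neg_neg, show ((π : ℂ) / (b:ℂ)) = ((π / b : ℝ) : ℂ) by push_cast; ring,
            show ((1/2 : ℂ)) = (((1/2 : ℝ) : ℝ) : ℂ) by norm_num,
            ← Complex.ofReal_cpow (by positivity),
            show (0 - (c:ℂ) ^ 2 / (4 * -(b:ℂ))) = ((c ^ 2 / (4 * b) : ℝ) : ℂ) by
              push_cast; field_simp; ring,
            ← Complex.ofReal_exp, ← Complex.ofReal_mul, Real.sqrt_eq_rpow]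
  have h2 : ∫ x : ℝ, ((rexp (-b * x ^ 2 + c * x) : ℝ) : ℂ)
      = ((∫ x : ℝ, rexp (-b * x ^ 2 + c * x) : ℝ) : ℂ) := integral_ofReal
  exact Complex.ofReal_injective (h2.symm.trans key)

lemma integral_mul_gauss_zero {b : ℝ} (hb : 0 < b) :
    ∫ x : ℝ, x * rexp (-b * x ^ 2) = 0 := by
  have h := integral_neg_eq_self (fun x : ℝ ↦ x * rexp (-b * x ^ 2)) (volume : Measure ℝ)
  have h2 : (∫ x : ℝ, (-x) * rexp (-b * (-x) ^ 2)) = - ∫ x : ℝ, x * rexp (-b * x ^ 2) := by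
    rw [← integral_neg]; congr 1; ext x; ring_nf
  rw [h2] at h
  linarith

lemma alt_sum (m : ℕ) (hm : m ≠ 0) : ∑ i ∈ range (m + 1), ((-1:ℝ)) ^ i * (m.choose i : ℝ) = 0 := by
  have h := Int.alternating_sum_range_choose (n := m)
  rw [if_neg hm] at h
  exact_mod_cast congrArg (fun z : ℤ => (z : ℝ)) h

lemma icc_sum_eq (n : ℕ) (g : ℕ → ℝ) : ∑ j ∈ Icc 1 n, g j = ∑ i ∈ range n, g (i + 1) := by
  induction n with
  | zero => simp
  | succ n ih => rw [Finset.sum_Icc_succ_top (by omega : 1 ≤ n + 1), ih, Finset.sum_range_succ]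

lemma harm (n : ℕ) :
    ∑ j ∈ Icc 1 n, ((1:ℝ)/j + ((-1:ℝ)^j / j) * (n.choose j : ℝ)) = 0 := by
  induction n with
  | zero => simp
  | succ n ih =>
    rw [Finset.sum_Icc_succ_top (by omega : 1 ≤ n + 1)]
    have pascal : ∀ j ∈ Icc 1 n, ((1:ℝ)/j + ((-1:ℝ)^j / j) * ((n+1).choose j : ℝ))
        = ((1:ℝ)/j + ((-1:ℝ)^j / j) * (n.choose j : ℝ))
          + ((-1:ℝ)^j * (((n+1).choose j : ℕ) : ℝ)) / (n+1) := by
      intro j hj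
      simp only [mem_Icc] at hj
      obtain ⟨i, rfl⟩ : ∃ i, j = i + 1 := ⟨j - 1, by omega⟩
      have hc : (((n+1).choose (i+1) : ℕ) : ℝ) = (n.choose (i+1) : ℝ) + (n.choose i : ℝ) := by
        rw [Nat.choose_succ_succ]; push_cast; ring
      have h2 : (n+1) * n.choose i = (n+1).choose (i+1) * (i+1) := Nat.add_one_mul_choose_eq n i
      have hd := congrArg (Nat.cast (R := ℝ)) h2
      push_cast at hd
      have hi : ((i:ℝ)+1) ≠ 0 := by positivity
      have hn1 : ((n:ℝ)+1) ≠ 0 := by positivity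
      have key : ((-1:ℝ)^(i+1) / ((i:ℝ)+1)) * (n.choose i : ℝ)
          = ((-1:ℝ)^(i+1) * (((n+1).choose (i+1) : ℕ) : ℝ)) / ((n:ℝ)+1) := by
        rw [div_mul_eq_mul_div, mul_div_assoc, mul_div_assoc]
        congr 1
        rw [div_eq_div_iff hi hn1]
        linarith [hd]
      push_cast
      rw [hc]
      linear_combination key + ((-1:ℝ)^(i+1)/((n:ℝ)+1)) * hc
    rw [Finset.sum_congr rfl pascal, Finset.sum_add_distrib, ih, zero_add]
    have e0 : ∑ i ∈ range (n + 2), ((-1:ℝ)) ^ i * ((n+1).choose i : ℝ) = 0 := alt_sum (n+1) (by omega)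
    rw [Finset.sum_range_succ, Finset.sum_range_succ'] at e0
    have e1 : ∑ j ∈ Icc 1 n, ((-1:ℝ)^j * (((n+1).choose j : ℕ) : ℝ)) / (n+1)
        = (∑ i ∈ range n, ((-1:ℝ)^(i+1) * (((n+1).choose (i+1) : ℕ) : ℝ))) / (n+1) := by
      rw [← Finset.sum_div]; congr 1; exact icc_sum_eq n _
    rw [e1]
    simp only [Nat.choose_self, Nat.choose_zero_right, Nat.cast_one, pow_zero, one_mul] at e0 ⊢
    have hn1 : ((n:ℝ)+1) ≠ 0 := by positivity
    push_cast
    field_simp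
    linarith [e0]

lemma icc_sum_eq' (n : ℕ) (g : ℕ → ℝ) : ∑ j ∈ Icc 1 n, g j = ∑ i ∈ range n, g (i + 1) := by
  induction n with
  | zero => simp
  | succ n ih => rw [Finset.sum_Icc_succ_top (by omega : 1 ≤ n + 1), ih, Finset.sum_range_succ]

noncomputable def P (n : ℕ) : ℝ → ℝ := fun z =>
  (∑ j ∈ Icc 1 n, ((1:ℝ)/j + ((-1:ℝ)^j / j) * (n.choose j : ℝ) * z ^ j)) + Real.log z

lemma key_deriv (n : ℕ) {z : ℝ} (hz : 0 < z) :
    HasDerivAt (P n) ((1 - z) ^ n / z) z := by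
  have hlog : HasDerivAt Real.log z⁻¹ z := Real.hasDerivAt_log hz.ne'
  have hsum : HasDerivAt
      (fun z : ℝ => ∑ j ∈ Icc 1 n, ((1:ℝ)/j + ((-1:ℝ)^j / j) * (n.choose j : ℝ) * z ^ j))
      (∑ j ∈ Icc 1 n, (((-1:ℝ)^j / j) * (n.choose j : ℝ) * ((j:ℝ) * z ^ (j - 1)))) z := by
    apply HasDerivAt.fun_sum
    intro j hj
    exact (HasDerivAt.const_mul _ (hasDerivAt_pow j z)).const_add _
  have heq : ∑ j ∈ Icc 1 n, (((-1:ℝ)^j / j) * (n.choose j : ℝ) * ((j:ℝ) * z ^ (j - 1)))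
      = ∑ j ∈ Icc 1 n, ((-1:ℝ)^j * (n.choose j : ℝ) * z ^ j) / z := by
    apply Finset.sum_congr rfl
    intro j hj
    simp only [mem_Icc] at hj
    have hj1 : 1 ≤ j := hj.1
    have hjR : (j:ℝ) ≠ 0 := by exact_mod_cast Nat.one_le_iff_ne_zero.mp hj1
    have hzp : z ^ j = z ^ (j - 1) * z := by
      conv_lhs => rw [show j = (j - 1) + 1 by omega]
      rw [pow_succ]
    rw [hzp]
    field_simp
  have hpow : ∑ j ∈ Icc 1 n, ((-1:ℝ)^j * (n.choose j : ℝ) * z ^ j) = (1 - z) ^ n - 1 := by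
    have hb := add_pow (-z) 1 n
    simp only [one_pow, mul_one] at hb
    rw [Finset.sum_range_succ'] at hb
    simp only [pow_zero, Nat.choose_zero_right, Nat.cast_one, one_mul] at hb
    have : ∑ j ∈ Icc 1 n, ((-1:ℝ)^j * (n.choose j : ℝ) * z ^ j)
        = ∑ i ∈ range n, ((-z) ^ (i+1) * ((n.choose (i+1) : ℕ) : ℝ)) := by
      rw [icc_sum_eq' n]
      apply Finset.sum_congr rfl
      intro i _
      rw [neg_pow]
      ring
    rw [this]
    have hnz : (-z + 1) = (1 - z) := by ring
    rw [hnz] at hb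
    linarith [hb]
  have := hsum.add hlog
  refine this.congr_deriv ?_
  rw [heq, ← Finset.sum_div, hpow]
  field_simp
  ring

lemma P_one (n : ℕ) : P n 1 = 0 := by
  simp only [P, Real.log_one, one_pow, mul_one, add_zero]
  exact harm n

lemma key_pointwise {n : ℕ} (hn : Odd n) {z : ℝ} (hz : 0 < z) :
    ∑ j ∈ Icc 1 n, ((1:ℝ)/j + ((-1:ℝ)^j / j) * (n.choose j : ℝ) * z ^ j) ≤ -Real.log z := by
  have goal : P n z ≤ 0 := by
    rcases le_or_gt z 1 with h | h
    · have mono : MonotoneOn (P n) (Set.Icc z 1) := by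
        apply monotoneOn_of_deriv_nonneg (convex_Icc z 1)
        · intro x hx
          exact (key_deriv n (lt_of_lt_of_le hz hx.1)).continuousAt.continuousWithinAt
        · intro x hx
          rw [interior_Icc] at hx
          exact (key_deriv n (hz.trans hx.1)).differentiableAt.differentiableWithinAt
        · intro x hx
          rw [interior_Icc] at hx
          rw [(key_deriv n (hz.trans hx.1)).deriv]
          have h1 : (0:ℝ) ≤ (1 - x) ^ n := pow_nonneg (by linarith [hx.2]) n
          exact div_nonneg h1 (hz.trans hx.1).le
      have := mono (Set.mem_Icc.mpr ⟨le_refl z, h⟩) (Set.mem_Icc.mpr ⟨h, le_refl 1⟩) h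
      rw [P_one] at this
      exact this
    · have mono : AntitoneOn (P n) (Set.Icc 1 z) := by
        apply antitoneOn_of_deriv_nonpos (convex_Icc 1 z)
        · intro x hx
          exact (key_deriv n (lt_of_lt_of_le one_pos hx.1)).continuousAt.continuousWithinAt
        · intro x hx
          rw [interior_Icc] at hx
          exact (key_deriv n (one_pos.trans hx.1)).differentiableAt.differentiableWithinAt
        · intro x hx
          rw [interior_Icc] at hx
          rw [(key_deriv n (one_pos.trans hx.1)).deriv]
          have hx1 : (0:ℝ) < x := one_pos.trans hx.1
          have h1 : (1 - x) ^ n ≤ 0 := Odd.pow_nonpos hn (by linarith [hx.1])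
          exact div_nonpos_of_nonpos_of_nonneg h1 hx1.le
      have := mono (Set.mem_Icc.mpr ⟨le_refl 1, h.le⟩) (Set.mem_Icc.mpr ⟨h.le, le_refl z⟩) h.le
      rw [P_one] at this
      exact this
  simp only [P] at goal
  linarith [goal]

lemma main_bound {n : ℕ} (hn : Odd n) {v : ℝ} (hv : 0 < v) (ε : ℝ) :
    ∑ j ∈ Icc 1 n, ((1:ℝ)/j + ((-1:ℝ)^j / j) * (n.choose j : ℝ)
        * rexp (((j:ℝ)^2 - ε*(j:ℝ)) * (v/2)))
      ≤ ε * (v/2) := by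
  set s : ℝ := v / 2 with hs
  set b : ℝ := (2*v)⁻¹ with hbdef
  have hb0 : 0 < b := by positivity
  set N : ℝ := Real.sqrt (π / b) with hN0
  have hN : 0 < N := Real.sqrt_pos.mpr (by positivity)
  have hw : Integrable (fun x : ℝ => rexp (-b*x^2)) := by
    have := integrable_rexp_quadratic hb0 0
    simpa using this
  have hwInt : ∫ x : ℝ, rexp (-b*x^2) = N := by
    have := integral_rexp_quadratic hb0 0
    simpa using this
  have hfourb : ∀ j : ℕ, (j:ℝ)^2 / (4*b) = (j:ℝ)^2 * s := by
    intro j; rw [hbdef, hs]; field_simp; ring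
  have he : ∀ j : ℕ, Integrable (fun x : ℝ => rexp (-b*x^2 + j*x)) :=
    fun j => integrable_rexp_quadratic hb0 j
  have heInt : ∀ j : ℕ, ∫ x : ℝ, rexp (-b*x^2 + j*x) = N * rexp ((j:ℝ)^2 * s) := by
    intro j
    rw [integral_rexp_quadratic hb0 j, hfourb j]
  set T : ℕ → ℝ → ℝ := fun j x =>
    (1/(j:ℝ)) * rexp (-b*x^2)
      + (((-1:ℝ)^j / j) * (n.choose j : ℝ) * rexp (-(ε*s)*j)) * rexp (-b*x^2 + j*x) with hT
  have hTint : ∀ j ∈ Icc 1 n, Integrable (T j) := by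
    intro j _
    exact (hw.const_mul _).add ((he j).const_mul _)
  have hSumInt : Integrable (fun x => ∑ j ∈ Icc 1 n, T j x) := integrable_finset_sum _ hTint
  have hval : ∫ x : ℝ, ∑ j ∈ Icc 1 n, T j x
      = N * ∑ j ∈ Icc 1 n, ((1:ℝ)/j + ((-1:ℝ)^j / j) * (n.choose j : ℝ)
          * rexp (((j:ℝ)^2 - ε*(j:ℝ)) * s)) := by
    rw [integral_finset_sum _ hTint, Finset.mul_sum]
    apply Finset.sum_congr rfl
    intro j _
    rw [hT]
    simp only
    rw [integral_add (hw.const_mul _) ((he j).const_mul _),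
      integral_const_mul, integral_const_mul, hwInt, heInt j]
    have hE2 : rexp (-(ε*s)*(j:ℝ)) * rexp ((j:ℝ)^2*s) = rexp (((j:ℝ)^2 - ε*(j:ℝ))*s) := by
      rw [← Real.exp_add]; congr 1; ring
    linear_combination (((-1:ℝ)^j / j) * (n.choose j : ℝ) * N) * hE2
  have hle : ∀ x : ℝ, ∑ j ∈ Icc 1 n, T j x ≤ (ε*s - x) * rexp (-b*x^2) := by
    intro x
    have hz : (0:ℝ) < rexp (x - ε*s) := exp_pos _
    have hk := key_pointwise hn hz
    rw [Real.log_exp] at hk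
    have hfac : ∑ j ∈ Icc 1 n, T j x
        = (∑ j ∈ Icc 1 n, ((1:ℝ)/j + ((-1:ℝ)^j / j) * (n.choose j : ℝ)
            * (rexp (x - ε*s)) ^ j)) * rexp (-b*x^2) := by
      rw [Finset.sum_mul]
      apply Finset.sum_congr rfl
      intro j _
      rw [hT]
      simp only
      have hZ : rexp (x - ε*s) ^ j = rexp ((j:ℝ)*(x - ε*s)) := by
        rw [← Real.exp_nat_mul]
      have hE : rexp (-(ε*s)*(j:ℝ)) * rexp (-b*x^2 + (j:ℝ)*x)
          = rexp ((j:ℝ)*(x - ε*s)) * rexp (-b*x^2) := by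
        rw [← Real.exp_add, ← Real.exp_add]; congr 1; ring
      rw [hZ]
      linear_combination (((-1:ℝ)^j / j) * (n.choose j : ℝ)) * hE
    rw [hfac]
    have : -(x - ε*s) = ε*s - x := by ring
    calc (∑ j ∈ Icc 1 n, ((1:ℝ)/j + ((-1:ℝ)^j / j) * (n.choose j : ℝ)
            * (rexp (x - ε*s)) ^ j)) * rexp (-b*x^2)
        ≤ (-(x - ε*s)) * rexp (-b*x^2) :=
          mul_le_mul_of_nonneg_right hk (exp_pos _).le
      _ = (ε*s - x) * rexp (-b*x^2) := by rw [this]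
  have hG : Integrable (fun x : ℝ => (ε*s - x) * rexp (-b*x^2)) := by
    have h1 : Integrable (fun x : ℝ => (ε*s) * rexp (-b*x^2)) := hw.const_mul _
    have h2 : Integrable (fun x : ℝ => x * rexp (-b*x^2)) := integrable_mul_exp_neg_mul_sq hb0
    have := h1.sub h2
    refine this.congr ?_
    filter_upwards with x
    simp only [Pi.sub_apply]
    ring
  have hGval : ∫ x : ℝ, (ε*s - x) * rexp (-b*x^2) = ε*s*N := by
    have h2 : Integrable (fun x : ℝ => x * rexp (-b*x^2)) := integrable_mul_exp_neg_mul_sq hb0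
    have hsplit : ∀ x : ℝ, (ε*s - x) * rexp (-b*x^2)
        = (ε*s) * rexp (-b*x^2) - x * rexp (-b*x^2) := fun x => by ring
    simp_rw [hsplit]
    rw [integral_sub (hw.const_mul _) h2, integral_const_mul, hwInt, integral_mul_gauss_zero hb0]
    ring
  have hfinal : N * (∑ j ∈ Icc 1 n, ((1:ℝ)/j + ((-1:ℝ)^j / j) * (n.choose j : ℝ)
      * rexp (((j:ℝ)^2 - ε*(j:ℝ)) * s))) ≤ N * (ε*s) := by
    rw [← hval]
    calc ∫ x : ℝ, ∑ j ∈ Icc 1 n, T j x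
        ≤ ∫ x : ℝ, (ε*s - x) * rexp (-b*x^2) := integral_mono hSumInt hG hle
      _ = ε*s*N := hGval
      _ = N * (ε*s) := by ring
  exact le_of_mul_le_mul_left hfinal hN
end JensenGapAux

/-- Let `μ ∈ ℝ`, `σ > 0`, and let `k ≥ 1`. Then, with
`b_{k,j} = ((−1)^j/j)·C(2k−1,j)`,
`∑_{j=1}^{2k−1} (1/j + b_{k,j}·exp((j²−j)σ²/2)) ≤ σ²/2
  ≤ −∑_{j=1}^{2k−1} (1/j + b_{k,j}·exp((j²+j)σ²/2))`;
these are the lower and upper bounds on the Jensen's gap `σ²/2` of a log-normal random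
variable with parameters `(μ, σ)`. -/
theorem jensen_gap_log_lognormal_bounds
    (μ σ : ℝ) (hσ : 0 < σ) (k : ℕ) (hk : 0 < k) :
    ∑ j ∈ Finset.Icc 1 (2 * k - 1),
        (1 / (j : ℝ) + ((-1 : ℝ) ^ j / (j : ℝ)) * ((2 * k - 1).choose j : ℝ) *
          Real.exp (((j : ℝ) ^ 2 - (j : ℝ)) * σ ^ 2 / 2))
      ≤ σ ^ 2 / 2 ∧
    σ ^ 2 / 2
      ≤ -∑ j ∈ Finset.Icc 1 (2 * k - 1),
          (1 / (j : ℝ) + ((-1 : ℝ) ^ j / (j : ℝ)) * ((2 * k - 1).choose j : ℝ) *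
            Real.exp (((j : ℝ) ^ 2 + (j : ℝ)) * σ ^ 2 / 2)) := by
  have hn : Odd (2 * k - 1) := ⟨k - 1, by omega⟩
  have hv : (0:ℝ) < σ ^ 2 := by positivity
  have h1 := main_bound hn hv 1
  have h2 := main_bound hn hv (-1)
  have e1 : ∑ j ∈ Finset.Icc 1 (2 * k - 1), ((1:ℝ)/j + ((-1:ℝ)^j / j) * ((2 * k - 1).choose j : ℝ)
        * Real.exp (((j:ℝ)^2 - 1*(j:ℝ)) * (σ^2/2)))
      = ∑ j ∈ Finset.Icc 1 (2 * k - 1),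
        (1 / (j : ℝ) + ((-1 : ℝ) ^ j / (j : ℝ)) * ((2 * k - 1).choose j : ℝ) *
          Real.exp (((j : ℝ) ^ 2 - (j : ℝ)) * σ ^ 2 / 2)) := by
    apply Finset.sum_congr rfl
    intro j _
    have : ((j:ℝ)^2 - 1*(j:ℝ)) * (σ^2/2) = ((j : ℝ) ^ 2 - (j : ℝ)) * σ ^ 2 / 2 := by ring
    rw [this]
  have e2 : ∑ j ∈ Finset.Icc 1 (2 * k - 1), ((1:ℝ)/j + ((-1:ℝ)^j / j) * ((2 * k - 1).choose j : ℝ)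
        * Real.exp (((j:ℝ)^2 - (-1)*(j:ℝ)) * (σ^2/2)))
      = ∑ j ∈ Finset.Icc 1 (2 * k - 1),
        (1 / (j : ℝ) + ((-1 : ℝ) ^ j / (j : ℝ)) * ((2 * k - 1).choose j : ℝ) *
          Real.exp (((j : ℝ) ^ 2 + (j : ℝ)) * σ ^ 2 / 2)) := by
    apply Finset.sum_congr rfl
    intro j _
    have : ((j:ℝ)^2 - (-1)*(j:ℝ)) * (σ^2/2) = ((j : ℝ) ^ 2 + (j : ℝ)) * σ ^ 2 / 2 := by ring
    rw [this]
  rw [e1] at h1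
  rw [e2] at h2
  constructor
  · linarith [h1]
  · linarith [h2]
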